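/- Fix k > 0 and let φ₀(r) = e^{−kr}/r and φ(r) = e^{−kr}(1/r + 3k/4 + k²r/4). Then for all r > 0, −(φ''(r) + (2/r)φ'(r)) + k² φ(r) = −k² r φ₀'(r); equivalently, φ is an exact solution of −∇²φ + k²φ = −k² x·∇φ₀ on ℝ³ \ {0} in the spherically symmetric setting. -/

import Mathlib

lemma exp_hd (k r : ℝ) : HasDerivAt (fun s : ℝ => Real.exp (-k * s)) (Real.exp (-k * r) * (-k)) r := by
  have := ((hasDerivAt_id r).const_mul (-k)).exp
  simpa [mul_comm] using this

lemma poly_hd (k r : ℝ) (hr : r ≠ 0) :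
    HasDerivAt (fun s : ℝ => 1 / s + 3 * k / 4 + k ^ 2 * s / 4) (-1 / r ^ 2 + k ^ 2 / 4) r := by
  have h1 : HasDerivAt (fun s : ℝ => 1 / s) (-1 / r ^ 2) r := by
    simpa [one_div, neg_div] using (hasDerivAt_inv hr)
  have h2 : HasDerivAt (fun s : ℝ => k ^ 2 * s / 4) (k ^ 2 / 4) r := by
    simpa using ((hasDerivAt_id r).const_mul (k ^ 2)).div_const 4
  exact (h1.add_const (3 * k / 4)).add h2

lemma phi_hd (k r : ℝ) (hr : r ≠ 0) :
    HasDerivAt (fun s : ℝ => Real.exp (-k * s) * (1 / s + 3 * k / 4 + k ^ 2 * s / 4))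
      (Real.exp (-k * r) * (-k) * (1 / r + 3 * k / 4 + k ^ 2 * r / 4)
        + Real.exp (-k * r) * (-1 / r ^ 2 + k ^ 2 / 4)) r :=
  (exp_hd k r).mul (poly_hd k r hr)

lemma phi0_hd (k r : ℝ) (hr : r ≠ 0) :
    HasDerivAt (fun s : ℝ => Real.exp (-k * s) / s)
      (Real.exp (-k * r) * (-k) / r + Real.exp (-k * r) * (-1 / r ^ 2)) r := by
  have h1 : HasDerivAt (fun s : ℝ => 1 / s) (-1 / r ^ 2) r := by
    simpa [one_div, neg_div] using (hasDerivAt_inv hr)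
  have := (exp_hd k r).mul h1
  simpa [div_eq_mul_inv, one_div, mul_comm, mul_assoc, mul_left_comm, Pi.mul_def] using this

lemma deriv_phi_eq (k : ℝ) : ∀ r ∈ Set.Ioi (0:ℝ),
    deriv (fun s : ℝ => Real.exp (-k * s) * (1 / s + 3 * k / 4 + k ^ 2 * s / 4)) r
      = Real.exp (-k * r) * (-k * (1 / r + 3 * k / 4 + k ^ 2 * r / 4) + (-1 / r ^ 2 + k ^ 2 / 4)) := by
  intro r hr
  have := (phi_hd k r (ne_of_gt hr)).deriv
  rw [this]; ring

theorem quark_potential_exact_solution (k : ℝ) (hk : 0 < k) :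
    ∀ r : ℝ, 0 < r →
      -(deriv (deriv (fun s => Real.exp (-k * s) * (1 / s + 3 * k / 4 + k ^ 2 * s / 4))) r
          + (2 / r) * deriv (fun s => Real.exp (-k * s) * (1 / s + 3 * k / 4 + k ^ 2 * s / 4)) r)
        + k ^ 2 * (Real.exp (-k * r) * (1 / r + 3 * k / 4 + k ^ 2 * r / 4))
        = -(k ^ 2) * r * deriv (fun s => Real.exp (-k * s) / s) r := by
  intro r hr
  have hr' := ne_of_gt hr
  -- first derivative value
  have hd1 := deriv_phi_eq k r hr
  -- second derivative: deriv f =ᶠ g near r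
  have hev : deriv (fun s : ℝ => Real.exp (-k * s) * (1 / s + 3 * k / 4 + k ^ 2 * s / 4))
      =ᶠ[nhds r] (fun s => Real.exp (-k * s) * (-k * (1 / s + 3 * k / 4 + k ^ 2 * s / 4) + (-1 / s ^ 2 + k ^ 2 / 4))) := by
    filter_upwards [Ioi_mem_nhds hr] with s hs
    exact deriv_phi_eq k s hs
  have hd2 : deriv (deriv (fun s : ℝ => Real.exp (-k * s) * (1 / s + 3 * k / 4 + k ^ 2 * s / 4))) r
      = deriv (fun s : ℝ => Real.exp (-k * s) * (-k * (1 / s + 3 * k / 4 + k ^ 2 * s / 4) + (-1 / s ^ 2 + k ^ 2 / 4))) r :=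
    Filter.EventuallyEq.deriv_eq hev
  -- derivative of g
  have hg : HasDerivAt (fun s : ℝ => Real.exp (-k * s) * (-k * (1 / s + 3 * k / 4 + k ^ 2 * s / 4) + (-1 / s ^ 2 + k ^ 2 / 4)))
      (Real.exp (-k * r) * (-k) * (-k * (1 / r + 3 * k / 4 + k ^ 2 * r / 4) + (-1 / r ^ 2 + k ^ 2 / 4))
        + Real.exp (-k * r) * (-k * (-1 / r ^ 2 + k ^ 2 / 4) + 2 / r ^ 3)) r := by
    have hinner : HasDerivAt (fun s : ℝ => -k * (1 / s + 3 * k / 4 + k ^ 2 * s / 4) + (-1 / s ^ 2 + k ^ 2 / 4))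
        (-k * (-1 / r ^ 2 + k ^ 2 / 4) + 2 / r ^ 3) r := by
      have h1 := (poly_hd k r hr').const_mul (-k)
      have h2 : HasDerivAt (fun s : ℝ => -1 / s ^ 2 + k ^ 2 / 4) (2 / r ^ 3) r := by
        have h := (((hasDerivAt_pow 2 r).inv (pow_ne_zero 2 hr')).neg).add_const (k ^ 2 / 4)
        have e1 : (fun s : ℝ => -(s ^ 2)⁻¹ + k ^ 2 / 4) = fun s : ℝ => -1 / s ^ 2 + k ^ 2 / 4 := by
          funext s; rw [neg_div, one_div]
        simp only [Pi.neg_apply, Pi.inv_apply] at h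
        rw [e1] at h
        have e2 : -(-((2:ℕ) * r ^ (2 - 1)) / (r ^ 2) ^ 2) = 2 / r ^ 3 := by
          push_cast
          field_simp
        rw [e2] at h
        exact h
      exact h1.add h2
    exact (exp_hd k r).mul hinner
  rw [hd2, hg.deriv, hd1, (phi0_hd k r hr').deriv]
  field_simp
  ring
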